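/- Let ω be a principal 2^p-th root of unity in a commutative ring D, let F ∈ D[X], and let ℓ, s be positive integers with 2^ℓ dividing s and (s + 2^ℓ) ≤ 2^p. Define F_{s,ℓ}(X) = F(ω^{[s]_p}·X) mod (X^{2^ℓ} − 1). Then the bit-reversed DFT of F_{s,ℓ} at ω^{2^{p−ℓ}} equals (F(ω^{[s]_p}), F(ω^{[s+1]_p}), …, F(ω^{[s+2^ℓ−1]_p})). -/

import Mathlib

/-- The length-`p` bit reversal of `i`. -/
def bitrev (p i : ℕ) : ℕ := ∑ j ∈ Finset.range p, (i / 2 ^ j % 2) * 2 ^ (p - 1 - j)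

lemma div_add_of_parts (ℓ s i : ℕ) (hdvd : 2 ^ ℓ ∣ s) (hi : i < 2 ^ ℓ) (j : ℕ) :
    (s + i) / 2 ^ j = s / 2 ^ j + i / 2 ^ j := by
  rcases lt_or_ge j ℓ with hj | hj
  · have h : 2 ^ j ∣ s := dvd_trans (pow_dvd_pow 2 hj.le) hdvd
    obtain ⟨k, hk⟩ := h
    subst hk
    rw [Nat.mul_add_div (pow_pos (by norm_num : (0:ℕ) < 2) _), Nat.mul_div_cancel_left _ (pow_pos (by norm_num : (0:ℕ) < 2) _)]
  · have hi0 : i / 2 ^ j = 0 := Nat.div_eq_of_lt (lt_of_lt_of_le hi (Nat.pow_le_pow_right (by norm_num) hj))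
    rw [hi0, add_zero]
    have hr : 2 ^ ℓ ∣ s % 2 ^ j := (Nat.dvd_mod_iff (pow_dvd_pow 2 hj)).mpr hdvd
    have hlt : s % 2 ^ j + i < 2 ^ j := by
      obtain ⟨m, hm⟩ := hr
      rcases Nat.eq_zero_or_pos m with hm0 | hm0
      · simp [hm, hm0]; exact lt_of_lt_of_le hi (Nat.pow_le_pow_right (by norm_num) hj)
      · have h1 : s % 2 ^ j < 2 ^ j := Nat.mod_lt _ (pow_pos (by norm_num : (0:ℕ) < 2) _)
        have h2 : 2 ^ j = 2 ^ ℓ * 2 ^ (j - ℓ) := by rw [← pow_add]; congr 1; omega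
        rw [hm, h2] at h1 ⊢
        have hmB : m < 2 ^ (j - ℓ) := lt_of_mul_lt_mul_left h1 (Nat.zero_le _)
        have : 2 ^ ℓ * (m + 1) ≤ 2 ^ ℓ * 2 ^ (j - ℓ) := Nat.mul_le_mul_left _ hmB
        have := Nat.mul_add (2^ℓ) m 1
        omega
    have hdm := Nat.div_add_mod s (2 ^ j)
    conv_lhs => rw [show s + i = 2 ^ j * (s / 2 ^ j) + (s % 2 ^ j + i) by omega]
    rw [Nat.mul_add_div (pow_pos (by norm_num : (0:ℕ) < 2) _), Nat.div_eq_of_lt hlt, add_zero]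

lemma bitrev_split (p ℓ s i : ℕ) (hlp : ℓ ≤ p) (hdvd : 2 ^ ℓ ∣ s) (hi : i < 2 ^ ℓ) :
    bitrev p (s + i) = bitrev p s + 2 ^ (p - ℓ) * bitrev ℓ i := by
  unfold bitrev
  rw [Finset.mul_sum]
  have hfil : Finset.range ℓ = (Finset.range p).filter (· < ℓ) := by
    ext x; simp; omega
  rw [hfil, Finset.sum_filter, ← Finset.sum_add_distrib]
  refine Finset.sum_congr rfl fun j hj => ?_
  simp only [Finset.mem_range] at hj
  rw [div_add_of_parts ℓ s i hdvd hi]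
  rcases lt_or_ge j ℓ with hjl | hjl
  · obtain ⟨k, hk⟩ : 2 ^ (j + 1) ∣ s := dvd_trans (pow_dvd_pow 2 hjl) hdvd
    have hsk : s / 2 ^ j = 2 * k := by
      rw [hk, pow_succ, show 2 ^ j * 2 * k = 2 ^ j * (2 * k) by ring,
        Nat.mul_div_cancel_left _ (pow_pos (by norm_num : (0:ℕ) < 2) j)]
    have hpow : 2 ^ (p - 1 - j) = 2 ^ (p - ℓ) * 2 ^ (ℓ - 1 - j) := by
      rw [← pow_add]; congr 1; omega
    rw [hsk, if_pos hjl, hpow]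
    have h1 : (2 * k + i / 2 ^ j) % 2 = i / 2 ^ j % 2 := by omega
    have h2 : (2 * k) % 2 = 0 := by omega
    rw [h1, h2]
    ring
  · have hi0 : i / 2 ^ j = 0 :=
      Nat.div_eq_of_lt (lt_of_lt_of_le hi (Nat.pow_le_pow_right (by norm_num) hjl))
    rw [hi0, if_neg (by omega)]
    ring

open Polynomial in
theorem partial_tft_lemma {D : Type*} [CommRing D] (p : ℕ) (ω : D)
    (hω : ω ^ 2 ^ p = 1)
    (hprin : ∀ i, 1 ≤ i → i < 2 ^ p → ∑ j ∈ Finset.range (2 ^ p), ω ^ (i * j) = 0)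
    (F : D[X]) (ℓ s : ℕ) (hℓ : 0 < ℓ) (hs : 0 < s)
    (hdvd : 2 ^ ℓ ∣ s) (hle : s + 2 ^ ℓ ≤ 2 ^ p) :
    ∀ i, i < 2 ^ ℓ →
      ((F.comp (C (ω ^ bitrev p s) * X)) %ₘ (X ^ 2 ^ ℓ - 1)).eval
          ((ω ^ 2 ^ (p - ℓ)) ^ bitrev ℓ i) =
        F.eval (ω ^ bitrev p (s + i)) := by
  intro i hi
  have hlp : ℓ ≤ p := by
    by_contra h
    have h1 : 2 ^ ℓ ≤ s := Nat.le_of_dvd hs hdvd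
    have h2 : 2 ^ p < 2 ^ ℓ := Nat.pow_lt_pow_right (by norm_num) (by omega)
    omega
  set y : D := (ω ^ 2 ^ (p - ℓ)) ^ bitrev ℓ i with hy
  have hy1 : y ^ 2 ^ ℓ = 1 := by
    rw [hy, ← pow_mul, ← pow_mul,
      show 2 ^ (p - ℓ) * (bitrev ℓ i * 2 ^ ℓ) = 2 ^ p * bitrev ℓ i by
        rw [show 2 ^ (p - ℓ) * (bitrev ℓ i * 2 ^ ℓ) = (2 ^ (p - ℓ) * 2 ^ ℓ) * bitrev ℓ i by ring,
          ← pow_add]; congr 2; omega,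
      pow_mul, hω, one_pow]
  have hmonic : (X ^ 2 ^ ℓ - 1 : D[X]).Monic := by
    have := monic_X_pow_sub_C (1 : D) (n := 2 ^ ℓ) (pow_ne_zero ℓ two_ne_zero)
    simpa using this
  rw [Polynomial.modByMonic_eq_sub_mul_div _ (X ^ 2 ^ ℓ - 1), Polynomial.eval_sub, Polynomial.eval_mul,
    Polynomial.eval_sub, Polynomial.eval_pow, Polynomial.eval_X, Polynomial.eval_one, hy1,
    sub_self, zero_mul, sub_zero, Polynomial.eval_comp, Polynomial.eval_mul, Polynomial.eval_C,
    Polynomial.eval_X]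
  congr 1
  rw [hy, ← pow_mul, ← pow_add, bitrev_split p ℓ s i hlp hdvd hi]
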